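/- Let μ_k = λ[l_k, r_k] (normalized Lebesgue measure on [l_k,r_k]) for k = 1,…,N, suppose C = Σ_k (l_k + r_k)/2, and suppose r_k − l_k ≤ Σ_{i≠k} (r_i − l_i) for every k. Then (μ₁,…,μ_N) ∈ V^N[C], i.e., there is a C-compatible boundary (l⃗, r⃗′) with μ_k ∈ D[l_k, r′_k] for all k and Σ_k 𝔼(μ_k) = C. -/

import Mathlib

open MeasureTheory

/-- `μ ∈ D[l,r]`: `μ = α·δ_l + ρ(x)dx` where `ρ` is nonnegative, nonincreasing on `[l,r]`
and vanishes outside `[l,r]` (the absolutely continuous part has total mass `1 − α`). -/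
def memD (l r : ℝ) (μ : Measure ℝ) : Prop :=
  ∃ α : ℝ, 0 ≤ α ∧ α ≤ 1 ∧ ∃ ρ : ℝ → ℝ,
    (∀ x, 0 ≤ ρ x) ∧ AntitoneOn ρ (Set.Icc l r) ∧ (∀ x ∉ Set.Icc l r, ρ x = 0) ∧
    μ = (ENNReal.ofReal α) • Measure.dirac l
          + volume.withDensity (fun x => ENNReal.ofReal (ρ x))

/-- `μ ∈ D_AC[l,r]`: `μ = ρ(x)dx` with `ρ` nonnegative, nonincreasing on `[l,r]`, vanishing
outside `[l,r]`. -/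
def memDAC (l r : ℝ) (μ : Measure ℝ) : Prop :=
  ∃ ρ : ℝ → ℝ,
    (∀ x, 0 ≤ ρ x) ∧ AntitoneOn ρ (Set.Icc l r) ∧ (∀ x ∉ Set.Icc l r, ρ x = 0) ∧
    μ = volume.withDensity (fun x => ENNReal.ofReal (ρ x))

/-- `λ[l,t]`: normalized Lebesgue measure on `[l,t]` for `l < t`, and `δ_l` for `t = l`. -/
noncomputable def lam (l t : ℝ) : Measure ℝ :=
  if l < t then (ENNReal.ofReal (t - l))⁻¹ • volume.restrict (Set.Icc l t)
  else Measure.dirac l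


/-- A pair of N-tuples (l, r) is a C-compatible boundary if 0 ≤ r_k − l_k ≤ C − Σᵢ lᵢ. -/
def CompatBoundary {N : ℕ} (C : ℝ) (l r : Fin N → ℝ) : Prop :=
  ∀ k, 0 ≤ r k - l k ∧ r k - l k ≤ C - ∑ i, l i

/-- The tuple μ belongs to V^N[C]: Σ 𝔼(μ_k) = C and μ_k ∈ D[l_k,r_k] for some C-compatible
boundary (l,r). -/
def memV {N : ℕ} (C : ℝ) (μ : Fin N → MeasureTheory.Measure ℝ) : Prop :=
  (∑ k, ∫ x, x ∂(μ k)) = C ∧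
  ∃ l r : Fin N → ℝ, CompatBoundary C l r ∧ ∀ k, memD (l k) (r k) (μ k)


lemma lam_integral (l t : ℝ) (h : l ≤ t) : ∫ x, x ∂(lam l t) = (l + t) / 2 := by
  rcases eq_or_lt_of_le h with he | hlt
  · rw [lam, if_neg (by linarith), integral_dirac]; linarith
  · rw [lam, if_pos hlt, integral_smul_measure]
    have h1 : ∫ x in Set.Icc l t, (x : ℝ) = (t ^ 2 - l ^ 2) / 2 := by
      rw [MeasureTheory.integral_Icc_eq_integral_Ioc,
        ← intervalIntegral.integral_of_le h, integral_id]
    rw [h1, ENNReal.toReal_inv, ENNReal.toReal_ofReal (by linarith)]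
    have : t - l ≠ 0 := by linarith
    field_simp
    ring_nf
    rw [← sub_mul, show t ^ 2 - l ^ 2 = (t + l) * (t - l) by ring, mul_assoc, mul_inv_cancel₀ this, mul_one]

lemma lam_memD (l t : ℝ) (h : l ≤ t) : memD l t (lam l t) := by
  rcases eq_or_lt_of_le h with he | hlt
  · refine ⟨1, zero_le_one, le_refl 1, fun _ => 0, fun x => le_refl 0, ?_, fun x _ => rfl, ?_⟩
    · intro a _ b _ _; exact le_refl 0
    · simp [lam, ← he, lt_irrefl]
  · refine ⟨0, le_refl 0, zero_le_one,
      Set.indicator (Set.Icc l t) (fun _ => (t - l)⁻¹), ?_, ?_, ?_, ?_⟩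
    · intro x
      by_cases hx : x ∈ Set.Icc l t
      · rw [Set.indicator_of_mem hx]; exact inv_nonneg.mpr (by linarith)
      · rw [Set.indicator_of_notMem hx]
    · intro a ha b hb _
      rw [Set.indicator_of_mem ha, Set.indicator_of_mem hb]
    · intro x hx; exact Set.indicator_of_notMem hx _
    · have hfun : (fun x => ENNReal.ofReal
          (Set.indicator (Set.Icc l t) (fun _ => (t - l)⁻¹) x)) =
          Set.indicator (Set.Icc l t) (fun _ => ENNReal.ofReal ((t - l)⁻¹)) := by
        funext x
        by_cases hx : x ∈ Set.Icc l t <;>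
          simp [Set.indicator_of_mem, Set.indicator_of_notMem, hx]
      rw [lam, if_pos hlt, hfun, withDensity_indicator measurableSet_Icc,
        withDensity_const, ENNReal.ofReal_inv_of_pos (by linarith)]
      simp

/-- a tuple of normalized Lebesgue measures with C = Σ (l_k+r_k)/2 and
r_k − l_k ≤ Σ_{i≠k}(r_i − l_i) belongs to V^N[C]. -/
theorem stmt12 {N : ℕ} (l r : Fin N → ℝ) (hlr : ∀ k, l k ≤ r k) (C : ℝ)
    (μ : Fin N → Measure ℝ) (hμ : ∀ k, μ k = lam (l k) (r k))
    (hC : C = ∑ k, (l k + r k) / 2)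
    (hineq : ∀ k, r k - l k ≤ ∑ i ∈ Finset.univ.erase k, (r i - l i)) :
    memV C μ := by
  constructor
  · rw [hC]
    apply Finset.sum_congr rfl
    intro k _
    rw [hμ k, lam_integral _ _ (hlr k)]
  · refine ⟨l, r, ?_, fun k => by rw [hμ k]; exact lam_memD _ _ (hlr k)⟩
    intro k
    refine ⟨by linarith [hlr k], ?_⟩
    have hs : ∑ i ∈ Finset.univ.erase k, (r i - l i)
        = (∑ i, (r i - l i)) - (r k - l k) :=
      Finset.sum_erase_eq_sub (Finset.mem_univ k)
    have h2 : C - ∑ i, l i = (∑ i, (r i - l i)) / 2 := by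
      rw [hC, ← Finset.sum_sub_distrib, Finset.sum_div]
      apply Finset.sum_congr rfl
      intro i _; ring
    have h3 := hineq k
    rw [hs] at h3
    linarith
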